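/- The set exp(D̄(0,ε)) = {e^z : |z| ≤ ε} is a convex subset of ℂ for every 0 < ε < 1. -/

import Mathlib

open Complex Set

namespace ExpConvexAux

lemma core (A B : ℂ)
    (hre : ∀ t ∈ Icc (0:ℝ) 1, 0 < (A + (t:ℂ) * (B - A)).re)
    (hle : ∀ t ∈ Icc (0:ℝ) 1, normSq (Complex.log (A + (t:ℂ) * (B - A))) ≤ 1) :
    ∀ t ∈ Icc (0:ℝ) 1, normSq (Complex.log (A + (t:ℂ) * (B - A))) ≤
      max (normSq (Complex.log A)) (normSq (Complex.log B)) := by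
  set D : ℂ := B - A with hD
  set γ : ℝ → ℂ := fun t => A + (t:ℂ) * D with hγ
  set F : ℝ → ℂ := fun t => Complex.log (γ t) with hFdef
  set Fd : ℝ → ℂ := fun t => D / γ t with hFd
  set Fdd : ℝ → ℂ := fun t => -(D * D) / (γ t) ^ 2 with hFdd
  set φ : ℝ → ℝ := fun t => normSq (F t) with hφ
  set φ' : ℝ → ℝ := fun t => 2 * ((F t).re * (Fd t).re + (F t).im * (Fd t).im) with hφ'
  set φ'' : ℝ → ℝ := fun t =>
    2 * (((Fd t).re ^ 2 + (Fd t).im ^ 2) +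
      ((F t).re * (Fdd t).re + (F t).im * (Fdd t).im)) with hφ''
  have hslit : ∀ t ∈ Icc (0:ℝ) 1, γ t ∈ slitPlane := fun t ht =>
    Or.inl (hre t ht)
  have hne : ∀ t ∈ Icc (0:ℝ) 1, γ t ≠ 0 := fun t ht =>
    slitPlane_ne_zero (hslit t ht)
  have hγd : ∀ x : ℝ, HasDerivAt γ D x := by
    intro x
    simpa [hγ] using (((hasDerivAt_id x).ofReal_comp).mul_const D).const_add A
  have hFderiv : ∀ x ∈ Icc (0:ℝ) 1, HasDerivAt F (Fd x) x := by
    intro x hx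
    have inner : HasDerivAt (fun w : ℂ => A + w * D) D (x:ℂ) := by
      simpa using ((hasDerivAt_id ((x:ℂ))).mul_const D).const_add A
    have hlog := (Complex.hasDerivAt_log (hslit x hx)).comp (x:ℂ) inner
    have h2 : HasDerivAt F ((γ x)⁻¹ * D) x := by
      simpa [hFdef, hγ, Function.comp] using hlog.comp_ofReal
    simpa [hFd, div_eq_mul_inv, mul_comm] using h2
  have hFdderiv : ∀ x ∈ Icc (0:ℝ) 1, HasDerivAt Fd (Fdd x) x := by
    intro x hx
    have inner : HasDerivAt (fun w : ℂ => A + w * D) D (x:ℂ) := by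
      simpa using ((hasDerivAt_id ((x:ℂ))).mul_const D).const_add A
    have hinvC : HasDerivAt (fun w : ℂ => (A + w * D)⁻¹) (-D / (γ x) ^ 2) (x:ℂ) :=
      inner.inv (hne x hx)
    have hinv : HasDerivAt (fun t : ℝ => (γ t)⁻¹) (-D / (γ x) ^ 2) x := by
      simpa [hγ, Function.comp] using hinvC.comp_ofReal
    have h2 := hinv.const_mul D
    have heq : (fun t => D * (γ t)⁻¹) = Fd := by
      funext t; simp [hFd, div_eq_mul_inv]
    rw [heq] at h2
    refine h2.congr_deriv ?_
    show _ = -(D * D) / (γ x) ^ 2; ring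
  have hφderiv : ∀ x ∈ Icc (0:ℝ) 1, HasDerivAt φ (φ' x) x := by
    intro x hx
    have hF := hFderiv x hx
    have hu : HasDerivAt (fun t => (F t).re) (Fd x).re x :=
      Complex.reCLM.hasFDerivAt.comp_hasDerivAt x hF
    have hv : HasDerivAt (fun t => (F t).im) (Fd x).im x :=
      Complex.imCLM.hasFDerivAt.comp_hasDerivAt x hF
    have h := (hu.mul hu).add (hv.mul hv)
    have heq : ((fun t => (F t).re) * (fun t => (F t).re) + (fun t => (F t).im) * (fun t => (F t).im)) = φ := by
      funext t; simp [hφ, Complex.normSq_apply]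
    rw [heq] at h
    refine h.congr_deriv ?_
    show _ = 2 * ((F x).re * (Fd x).re + (F x).im * (Fd x).im); ring
  have hφ'deriv : ∀ x ∈ Icc (0:ℝ) 1, HasDerivAt φ' (φ'' x) x := by
    intro x hx
    have hF := hFderiv x hx
    have hFd' := hFdderiv x hx
    have hu : HasDerivAt (fun t => (F t).re) (Fd x).re x :=
      Complex.reCLM.hasFDerivAt.comp_hasDerivAt x hF
    have hv : HasDerivAt (fun t => (F t).im) (Fd x).im x :=
      Complex.imCLM.hasFDerivAt.comp_hasDerivAt x hF
    have hu2 : HasDerivAt (fun t => (Fd t).re) (Fdd x).re x :=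
      Complex.reCLM.hasFDerivAt.comp_hasDerivAt x hFd'
    have hv2 : HasDerivAt (fun t => (Fd t).im) (Fdd x).im x :=
      Complex.imCLM.hasFDerivAt.comp_hasDerivAt x hFd'
    have h := (((hu.mul hu2).add (hv.mul hv2)).const_mul 2)
    refine HasDerivAt.congr_deriv (f := φ') h ?_
    show _ = 2 * (((Fd x).re ^ 2 + (Fd x).im ^ 2) + ((F x).re * (Fdd x).re + (F x).im * (Fdd x).im)); ring
  have hφ''nonneg : ∀ x ∈ Icc (0:ℝ) 1, 0 ≤ φ'' x := by
    intro x hx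
    have hγpos : 0 < ‖(γ x)‖ := norm_pos_iff.mpr (hne x hx)
    have habsF : ‖(F x)‖ ≤ 1 := by
      have h1 : ‖(F x)‖ = Real.sqrt (normSq (F x)) := Complex.norm_def _
      rw [h1]
      calc Real.sqrt (normSq (F x)) ≤ Real.sqrt 1 := Real.sqrt_le_sqrt (hle x hx)
        _ = 1 := Real.sqrt_one
    have hterm1 : (Fd x).re ^ 2 + (Fd x).im ^ 2
        = (‖D‖)^2 / (‖(γ x)‖)^2 := by
      have h1 : (Fd x).re ^ 2 + (Fd x).im ^ 2 = ‖(Fd x)‖ ^ 2 := by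
        rw [Complex.sq_norm, Complex.normSq_apply]; ring
      have h2 : ‖(Fd x)‖ = ‖D‖ / ‖(γ x)‖ := by
        simp [hFd, map_div₀]
      rw [h1, h2, div_pow]
    have habsFdd : ‖(Fdd x)‖ = (‖D‖)^2 / (‖(γ x)‖)^2 := by
      simp [hFdd, map_div₀, map_mul, map_pow]
      ring
    have hCS : -(‖(F x)‖ * ‖(Fdd x)‖)
        ≤ (F x).re * (Fdd x).re + (F x).im * (Fdd x).im := by
      have h1 : (F x).re * (Fdd x).re + (F x).im * (Fdd x).im
          = ((starRingEnd ℂ) (F x) * (Fdd x)).re := by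
        simp [Complex.mul_re]
      rw [h1]
      have h2 := Complex.abs_re_le_norm ((starRingEnd ℂ) (F x) * Fdd x)
      have h3 : ‖((starRingEnd ℂ) (F x) * Fdd x)‖
          = ‖(F x)‖ * ‖(Fdd x)‖ := by
        simp [map_mul]
      rw [h3] at h2
      have h4 := neg_abs_le (((starRingEnd ℂ) (F x) * Fdd x).re)
      linarith
    have hnonneg : (0:ℝ) ≤ (‖D‖)^2 / (‖(γ x)‖)^2 :=
      div_nonneg (sq_nonneg _) (sq_nonneg _)
    have hkey : ‖(F x)‖ * ((‖D‖)^2 / (‖(γ x)‖)^2)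
        ≤ (‖D‖)^2 / (‖(γ x)‖)^2 :=
      mul_le_of_le_one_left hnonneg habsF
    rw [habsFdd] at hCS
    simp only [hφ'']
    linarith
  -- convexity and conclusion
  have hcont : ContinuousOn φ (Icc (0:ℝ) 1) := by
    intro t ht
    have hγc : ContinuousAt γ t := by fun_prop
    have := (Complex.continuous_normSq.continuousAt.comp
      ((continuousAt_clog (hslit t ht)).comp hγc))
    exact this.continuousWithinAt
  have hconv : ConvexOn ℝ (Icc (0:ℝ) 1) φ := by
    apply convexOn_of_hasDerivWithinAt2_nonneg (convex_Icc 0 1) hcont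
      (f' := φ') (f'' := φ'')
    · intro x hx
      exact ((hφderiv x (interior_subset hx)).hasDerivWithinAt)
    · intro x hx
      exact ((hφ'deriv x (interior_subset hx)).hasDerivWithinAt)
    · intro x hx
      exact hφ''nonneg x (interior_subset hx)
  intro t ht
  have h0 : (0:ℝ) ∈ Icc (0:ℝ) 1 := by constructor <;> norm_num
  have h1 : (1:ℝ) ∈ Icc (0:ℝ) 1 := by constructor <;> norm_num
  have := hconv.2 h0 h1 (by linarith [ht.2] : (0:ℝ) ≤ 1 - t) ht.1 (by ring)
  have heval : (1 - t) • (0:ℝ) + t • (1:ℝ) = t := by simp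
  rw [heval] at this
  have hφ0 : φ 0 = normSq (Complex.log A) := by simp [hφ, hFdef, hγ]
  have hφ1 : φ 1 = normSq (Complex.log B) := by simp [hφ, hFdef, hγ, hD]
  have hmax0 : φ 0 ≤ max (normSq (Complex.log A)) (normSq (Complex.log B)) := by
    rw [hφ0]; exact le_max_left _ _
  have hmax1 : φ 1 ≤ max (normSq (Complex.log A)) (normSq (Complex.log B)) := by
    rw [hφ1]; exact le_max_right _ _
  rw [smul_eq_mul, smul_eq_mul] at this
  have h2 : (1 - t) * φ 0 + t * φ 1
      ≤ max (normSq (Complex.log A)) (normSq (Complex.log B)) := by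
    nlinarith [hmax0, hmax1, ht.1, ht.2]
  have h3 : φ t ≤ max (normSq (Complex.log A)) (normSq (Complex.log B)) := by
    linarith
  exact h3


lemma key (ε : ℝ) (hε0 : 0 < ε) (hε1 : ε < 1) (α β : ℂ)
    (hα : ‖α‖ ≤ ε) (hβ : ‖β‖ ≤ ε) :
    ∀ t ∈ Icc (0:ℝ) 1, ∃ u : ℂ, ‖u‖ ≤ ε ∧
      Complex.exp u = Complex.exp α + (t:ℂ) * (Complex.exp β - Complex.exp α) := by
  set pr : ℝ → ℝ := fun s => max 0 (min 1 s) with hpr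
  have prmem : ∀ s, pr s ∈ Icc (0:ℝ) 1 := by
    intro s
    constructor
    · exact le_max_left _ _
    · simp [hpr]
  have preq : ∀ s ∈ Icc (0:ℝ) 1, pr s = s := by
    intro s hs
    simp [hpr, min_eq_right hs.2, max_eq_right hs.1]
  have prcont : Continuous pr := continuous_const.max (continuous_const.min continuous_id)
  set Γ : ℝ × ℝ → ℂ := fun p => Complex.exp ((pr p.1 : ℂ) * α) +
    ((pr p.2 : ℂ)) * (Complex.exp ((pr p.1 : ℂ) * β) - Complex.exp ((pr p.1 : ℂ) * α)) with hΓ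
  set Ψ : ℝ × ℝ → ℝ := fun p => normSq (Complex.log (Γ p)) with hΨ
  have hπ2 : (1:ℝ) < Real.pi / 2 := by nlinarith [Real.pi_gt_three]
  have him : ∀ (s : ℝ) (z : ℂ), ‖z‖ ≤ ε → |((pr s : ℂ) * z).im| ≤ ε := by
    intro s z hz
    have h1 : ((pr s : ℂ) * z).im = pr s * z.im := by
      simp [Complex.mul_im]
    rw [h1, abs_mul, _root_.abs_of_nonneg (prmem s).1]
    have h2 := Complex.abs_im_le_norm z
    nlinarith [(prmem s).1, (prmem s).2, abs_nonneg z.im]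
  have hexp_re_pos : ∀ (s : ℝ) (z : ℂ), ‖z‖ ≤ ε →
      0 < (Complex.exp ((pr s : ℂ) * z)).re := by
    intro s z hz
    rw [Complex.exp_re]
    apply mul_pos (Real.exp_pos _)
    apply Real.cos_pos_of_mem_Ioo
    have h := abs_le.mp (him s z hz)
    constructor
    · simp only [neg_lt]
      nlinarith [h.1]
    · nlinarith [h.2]
  have hrepos : ∀ p : ℝ × ℝ, 0 < (Γ p).re := by
    intro p
    have hA := hexp_re_pos p.1 α hα
    have hB := hexp_re_pos p.1 β hβ
    have ht := prmem p.2
    have hre : (Γ p).re = (1 - pr p.2) * (Complex.exp ((pr p.1 : ℂ) * α)).re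
        + pr p.2 * (Complex.exp ((pr p.1 : ℂ) * β)).re := by
      simp [hΓ, Complex.add_re, Complex.sub_re, Complex.mul_re, Complex.ofReal_re,
        Complex.ofReal_im]
      ring
    rw [hre]
    have hm : 0 < min (Complex.exp ((pr p.1 : ℂ) * α)).re (Complex.exp ((pr p.1 : ℂ) * β)).re :=
      lt_min hA hB
    have h1t : (0:ℝ) ≤ 1 - pr p.2 := by linarith [ht.2]
    have e1 := mul_le_mul_of_nonneg_left
      (min_le_left (Complex.exp ((pr p.1 : ℂ) * α)).re (Complex.exp ((pr p.1 : ℂ) * β)).re) h1t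
    have e2 := mul_le_mul_of_nonneg_left
      (min_le_right (Complex.exp ((pr p.1 : ℂ) * α)).re (Complex.exp ((pr p.1 : ℂ) * β)).re) ht.1
    nlinarith [hm, e1, e2, ht.1, ht.2]
  have hΓcont : Continuous Γ := by
    apply Continuous.add
    · exact Complex.continuous_exp.comp ((Complex.continuous_ofReal.comp (prcont.comp continuous_fst)).mul continuous_const)
    · exact ((Complex.continuous_ofReal.comp (prcont.comp continuous_snd)).mul
        ((Complex.continuous_exp.comp ((Complex.continuous_ofReal.comp (prcont.comp continuous_fst)).mul continuous_const)).sub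
         (Complex.continuous_exp.comp ((Complex.continuous_ofReal.comp (prcont.comp continuous_fst)).mul continuous_const))))
  have hΨcont : Continuous Ψ := by
    rw [continuous_iff_continuousAt]
    intro p
    have := (Complex.continuous_normSq.continuousAt.comp
      ((continuousAt_clog (Or.inl (hrepos p))).comp hΓcont.continuousAt))
    exact this
  -- key step using core convexity
  have hkeystep : ∀ τ ∈ Icc (0:ℝ) 1, (∀ t ∈ Icc (0:ℝ) 1, Ψ (τ, t) ≤ 1) →
      ∀ t ∈ Icc (0:ℝ) 1, Ψ (τ, t) ≤ τ ^ 2 * ε ^ 2 := by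
    intro τ hτ hyp t ht
    have hpτ : pr τ = τ := preq τ hτ
    set A := Complex.exp ((τ:ℂ) * α) with hA
    set B := Complex.exp ((τ:ℂ) * β) with hB
    have hΓeq : ∀ s ∈ Icc (0:ℝ) 1, Γ (τ, s) = A + (s:ℂ) * (B - A) := by
      intro s hs
      simp [hΓ, hpτ, preq s hs, hA, hB]
    have hre' : ∀ s ∈ Icc (0:ℝ) 1, 0 < (A + (s:ℂ) * (B - A)).re := by
      intro s hs
      have := hrepos (τ, s)
      rwa [hΓeq s hs] at this
    have hle' : ∀ s ∈ Icc (0:ℝ) 1, normSq (Complex.log (A + (s:ℂ) * (B - A))) ≤ 1 := by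
      intro s hs
      have := hyp s hs
      rw [hΨ] at this
      simp only at this
      rwa [hΓeq s hs] at this
    have hmax := core A B hre' hle' t ht
    have himτα : |((τ:ℂ) * α).im| ≤ ε := by
      have := him τ α hα
      rwa [hpτ] at this
    have himτβ : |((τ:ℂ) * β).im| ≤ ε := by
      have := him τ β hβ
      rwa [hpτ] at this
    have hπ := Real.pi_gt_three
    have hlogA : Complex.log A = (τ:ℂ) * α := by
      apply Complex.log_exp
      · nlinarith [(abs_le.mp himτα).1]
      · nlinarith [(abs_le.mp himτα).2]
    have hlogB : Complex.log B = (τ:ℂ) * β := by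
      apply Complex.log_exp
      · nlinarith [(abs_le.mp himτβ).1]
      · nlinarith [(abs_le.mp himτβ).2]
    have hnsα : normSq ((τ:ℂ) * α) ≤ τ ^ 2 * ε ^ 2 := by
      rw [Complex.normSq_mul, Complex.normSq_ofReal]
      have h1 : normSq α ≤ ε ^ 2 := by
        rw [← Complex.sq_norm]
        nlinarith [norm_nonneg α]
      nlinarith [Complex.normSq_nonneg α, sq_nonneg τ]
    have hnsβ : normSq ((τ:ℂ) * β) ≤ τ ^ 2 * ε ^ 2 := by
      rw [Complex.normSq_mul, Complex.normSq_ofReal]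
      have h1 : normSq β ≤ ε ^ 2 := by
        rw [← Complex.sq_norm]
        nlinarith [norm_nonneg β]
      nlinarith [Complex.normSq_nonneg β, sq_nonneg τ]
    rw [hΨ]
    simp only
    rw [hΓeq t ht]
    calc normSq (Complex.log (A + (t:ℂ) * (B - A)))
        ≤ max (normSq (Complex.log A)) (normSq (Complex.log B)) := hmax
      _ ≤ τ ^ 2 * ε ^ 2 := by
          rw [hlogA, hlogB]
          exact max_le hnsα hnsβ
  -- the clopen / sSup argument
  set S : Set ℝ := {τ | τ ∈ Icc (0:ℝ) 1 ∧ ∀ t ∈ Icc (0:ℝ) 1, Ψ (τ, t) ≤ τ ^ 2 * ε ^ 2}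
    with hS
  have h0S : (0:ℝ) ∈ S := by
    refine ⟨⟨le_refl 0, zero_le_one⟩, ?_⟩
    intro t ht
    have hΓ0 : Γ (0, t) = 1 := by
      simp [hΓ, hpr]
    rw [hΨ]
    simp only
    rw [hΓ0]
    simp
  have hSsub : S ⊆ Icc (0:ℝ) 1 := fun τ h => h.1
  have hbdd : BddAbove S := BddAbove.mono hSsub bddAbove_Icc
  have hclosed : IsClosed S := by
    have hSeq : S = Icc (0:ℝ) 1 ∩ ⋂ t ∈ Icc (0:ℝ) 1, {τ | Ψ (τ, t) ≤ τ ^ 2 * ε ^ 2} := by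
      ext τ
      constructor
      · rintro ⟨h1, h2⟩
        exact ⟨h1, mem_iInter₂.mpr h2⟩
      · rintro ⟨h1, h2⟩
        exact ⟨h1, fun t ht => mem_iInter₂.mp h2 t ht⟩
    rw [hSeq]
    refine isClosed_Icc.inter (isClosed_biInter fun t ht => ?_)
    exact isClosed_le (hΨcont.comp (continuous_id.prodMk continuous_const))
      (((continuous_pow 2).mul continuous_const))
  have hTS : sSup S ∈ S := IsClosed.csSup_mem hclosed ⟨0, h0S⟩ hbdd
  have hT1 : sSup S ≤ 1 := csSup_le ⟨0, h0S⟩ (fun x hx => (hSsub hx).2)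
  have hT0 : (0:ℝ) ≤ sSup S := le_csSup hbdd h0S
  have hTeq : sSup S = 1 := by
    by_contra hne'
    have hTlt : sSup S < 1 := lt_of_le_of_ne hT1 hne'
    have hU : IsOpen {p : ℝ × ℝ | Ψ p < 1} := isOpen_lt hΨcont continuous_const
    have hsub2 : ({sSup S} : Set ℝ) ×ˢ Icc (0:ℝ) 1 ⊆ {p | Ψ p < 1} := by
      rintro ⟨τ, t⟩ ⟨hτ, ht⟩
      simp only [mem_singleton_iff] at hτ
      subst hτ
      have h := hTS.2 t ht
      have : (sSup S) ^ 2 ≤ 1 := by nlinarith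
      simp only [mem_setOf_eq]
      nlinarith
    obtain ⟨u, v, hu, hv, hTu, hIv, huv⟩ :=
      generalized_tube_lemma isCompact_singleton isCompact_Icc hU hsub2
    obtain ⟨δ, hδ, hball⟩ := Metric.isOpen_iff.mp hu (sSup S) (hTu rfl)
    set τ' := min 1 (sSup S + δ / 2) with hτ'
    have hτ'T : sSup S < τ' := lt_min hTlt (by linarith)
    have hτ'mem : τ' ∈ Icc (0:ℝ) 1 := ⟨by linarith, min_le_left _ _⟩
    have hτ'u : τ' ∈ u := by
      apply hball
      rw [Metric.mem_ball, Real.dist_eq, abs_lt]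
      have : τ' ≤ sSup S + δ / 2 := min_le_right _ _
      constructor <;> linarith
    have hτ'S : τ' ∈ S := by
      refine ⟨hτ'mem, hkeystep τ' hτ'mem ?_⟩
      intro t ht
      have hmem : ((τ', t) : ℝ × ℝ) ∈ u ×ˢ v := ⟨hτ'u, hIv ht⟩
      exact le_of_lt (huv hmem)
    exact absurd (le_csSup hbdd hτ'S) (not_le.mpr hτ'T)
  -- conclusion
  intro t ht
  have hfin : Ψ (1, t) ≤ ε ^ 2 := by
    have := hTS.2 t ht
    rw [hTeq] at this
    simpa using this
  have hΓ1 : Γ (1, t) = Complex.exp α + (t:ℂ) * (Complex.exp β - Complex.exp α) := by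
    have h1 : pr 1 = 1 := preq 1 ⟨zero_le_one, le_refl 1⟩
    simp [hΓ, h1, preq t ht]
  have hwre : 0 < (Γ (1, t)).re := hrepos (1, t)
  have hwne : Γ (1, t) ≠ 0 := by
    intro h
    rw [h] at hwre
    simp at hwre
  refine ⟨Complex.log (Γ (1, t)), ?_, ?_⟩
  · rw [Complex.norm_def]
    have h2 : normSq (Complex.log (Γ (1, t))) ≤ ε ^ 2 := by
      have := hfin
      rw [hΨ] at this
      simpa using this
    calc Real.sqrt (normSq (Complex.log (Γ (1, t)))) ≤ Real.sqrt (ε ^ 2) :=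
          Real.sqrt_le_sqrt h2
      _ = ε := by rw [Real.sqrt_sq hε0.le]
  · rw [Complex.exp_log hwne, hΓ1]

end ExpConvexAux

theorem exp_closedBall_convex (ε : ℝ) (hε0 : 0 < ε) (hε1 : ε < 1) :
    Convex ℝ (Complex.exp '' Metric.closedBall (0 : ℂ) ε) := by
  intro x hx y hy p q hp hq hpq
  obtain ⟨a, ha, rfl⟩ := hx
  obtain ⟨b, hb, rfl⟩ := hy
  have ha' : ‖a‖ ≤ ε := by
    simpa [Complex.dist_eq] using ha
  have hb' : ‖b‖ ≤ ε := by
    simpa [Complex.dist_eq] using hb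
  obtain ⟨u, hu, hexp⟩ := ExpConvexAux.key ε hε0 hε1 a b ha' hb' q ⟨hq, by linarith⟩
  refine ⟨u, ?_, ?_⟩
  · simpa [Complex.dist_eq] using hu
  · rw [hexp]
    have hpc : (p : ℂ) = 1 - (q : ℂ) := by
      have : p = 1 - q := by linarith
      rw [this]
      push_cast
      ring
    rw [Complex.real_smul, Complex.real_smul, hpc]
    ring
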